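/- For even n, the adjacency matrix M of the hypercube Cayley graph of (F₂ⁿ, Sₙ) is self-dual: M·Mᵀ = 0 over F₂ and rank(M) = 2^{n−1}, hence the row space of M equals its own orthogonal complement in F₂^{2ⁿ}. -/

import Mathlib

section aux
variable {n : ℕ}

private lemma zmod2_cases : ∀ a : ZMod 2, a = 0 ∨ a = 1 := by decide

private lemma pi_add_self (u : Fin n → ZMod 2) : u + u = 0 :=
  funext fun _ => CharTwo.add_self_eq_zero _

private lemma pi_key (u v : Fin n → ZMod 2) : u + (u + v) = v := by
  rw [← add_assoc, pi_add_self, zero_add]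

private lemma dist_eq_norm_add (x y : Fin n → ZMod 2) :
    hammingDist x y = hammingNorm (x + y) := by
  rw [hammingDist_eq_hammingNorm]
  congr 1
  funext i
  rw [Pi.add_apply, Pi.add_apply, Pi.neg_apply, CharTwo.neg_eq]

private lemma norm_one_iff (u : Fin n → ZMod 2) :
    hammingNorm u = 1 ↔ ∃ j, u = (Pi.single j 1 : Fin n → ZMod 2) := by
  constructor
  · intro h
    rw [hammingNorm, Finset.card_eq_one] at h
    obtain ⟨j, hj⟩ := h
    refine ⟨j, funext fun i => ?_⟩
    have hmem : ∀ i : Fin n, u i ≠ 0 ↔ i = j := by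
      intro i
      rw [← Finset.mem_singleton, ← hj, Finset.mem_filter]
      simp
    by_cases hij : i = j
    · subst hij
      have h1 : u i ≠ 0 := (hmem i).mpr rfl
      rcases zmod2_cases (u i) with h | h
      · exact absurd h h1
      · rw [h, Pi.single_eq_same]
    · have h0 : u i = 0 := by
        by_contra hc; exact hij ((hmem i).mp hc)
      rw [h0, Pi.single_eq_of_ne hij]
  · rintro ⟨j, rfl⟩
    rw [hammingNorm]
    have : (Finset.filter (fun i => (Pi.single j 1 : Fin n → ZMod 2) i ≠ 0) Finset.univ) = {j} := by
      ext i
      by_cases hij : i = j <;> simp [hij, Pi.single_eq_of_ne]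
    rw [this, Finset.card_singleton]

private lemma norm_single (j : Fin n) : hammingNorm ((Pi.single j 1 : Fin n → ZMod 2)) = 1 :=
  (norm_one_iff _).mpr ⟨j, rfl⟩

private lemma single_inj {a b : Fin n} (h : (Pi.single a 1 : Fin n → ZMod 2) = Pi.single b 1) :
    a = b := by
  by_contra hne
  have := congrFun h a
  rw [Pi.single_eq_same, Pi.single_eq_of_ne hne] at this
  exact one_ne_zero (α := ZMod 2) (by simpa using this.symm)

private lemma sphere_card (x : Fin n → ZMod 2) :
    (Finset.filter (fun y => hammingDist x y = 1) Finset.univ).card = n := by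
  have himg : Finset.filter (fun y => hammingDist x y = 1) Finset.univ =
      Finset.image (fun j : Fin n => x + Pi.single j 1) Finset.univ := by
    ext y
    simp only [Finset.mem_filter, Finset.mem_univ, true_and, Finset.mem_image]
    rw [dist_eq_norm_add, norm_one_iff]
    constructor
    · rintro ⟨j, hj⟩
      exact ⟨j, by rw [← hj, pi_key]⟩
    · rintro ⟨j, rfl⟩
      exact ⟨j, by rw [pi_key]⟩
  rw [himg, Finset.card_image_of_injective _ ?_, Finset.card_univ, Fintype.card_fin]
  intro a b hab
  exact single_inj (by simpa [pi_key] using congrArg (fun u => x + u) hab)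

end aux

theorem stmt4 (n : ℕ) (hn : Even n) (hpos : 0 < n)
    (M : Matrix (Fin n → ZMod 2) (Fin n → ZMod 2) (ZMod 2))
    (hM : ∀ x y, M x y = if hammingDist x y = 1 then 1 else 0) :
    M * M.transpose = 0 ∧ M.rank = 2 ^ (n - 1) ∧
      (Submodule.span (ZMod 2) (Set.range M) : Set ((Fin n → ZMod 2) → ZMod 2)) =
        {v | ∀ c ∈ Submodule.span (ZMod 2) (Set.range M), ∑ y, v y * c y = 0} := by
  classical
  have h11 : (1 : ZMod 2) + 1 = 0 := by decide
  have hsymm : M.transpose = M := by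
    ext x y
    rw [Matrix.transpose_apply, hM, hM, hammingDist_comm]
  have hMcomm : ∀ x y, M x y = M y x := by
    intro x y; rw [hM, hM, hammingDist_comm]
  -- Step A : M * M = 0
  have hMM : M * M = 0 := by
    ext x z
    rw [Matrix.mul_apply, Matrix.zero_apply]
    by_cases hxz : x = z
    · subst hxz
      have hterm : ∀ y, M x y * M y x = if hammingDist x y = 1 then (1 : ZMod 2) else 0 := by
        intro y
        rw [← hMcomm x y, hM]
        by_cases h : hammingDist x y = 1 <;> simp [h]
      rw [Finset.sum_congr rfl (fun y _ => hterm y), Finset.sum_boole, sphere_card]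
      obtain ⟨k, hk⟩ := hn
      rw [hk]
      push_cast
      rw [CharTwo.add_self_eq_zero]
    · refine Finset.sum_involution (fun y _ => x + z + y) ?_ ?_ ?_ ?_
      · intro y _
        have e1 : x + (x + z + y) = z + y := by
          have h' : x + (x + z + y) = x + x + (z + y) := by ring
          rw [h', pi_add_self, zero_add]
        have e2 : (x + z + y) + z = x + y := by
          have h' : (x + z + y) + z = x + y + (z + z) := by ring
          rw [h', pi_add_self, add_zero]
        have h1 : M x (x + z + y) = M y z := by
          rw [hM, hM, dist_eq_norm_add, dist_eq_norm_add, e1,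
            show y + z = z + y from add_comm y z]
        have h2 : M (x + z + y) z = M x y := by
          rw [hM, hM, dist_eq_norm_add, dist_eq_norm_add, e2]
        rw [h1, h2, mul_comm]
        exact CharTwo.add_self_eq_zero _
      · intro y _ _ heq
        apply hxz
        have h0 : x + z = 0 := by
          have hthis := congrArg (fun u => u + y) heq
          have h' : x + z + y + y = x + z + (y + y) := by ring
          rw [h', pi_add_self, add_zero] at hthis
          exact hthis
        have hthis := congrArg (fun u => u + z) h0
        have h' : x + z + z = x + (z + z) := by ring
        rw [h', pi_add_self, add_zero, zero_add] at hthis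
        exact hthis
      · intro y _; exact Finset.mem_univ _
      · intro y _; exact pi_key (x + z) y
  -- the homotopy matrix
  set i0 : Fin n := ⟨0, hpos⟩ with hi0
  set e : Fin n → ZMod 2 := Pi.single i0 1 with he
  have hei0 : e i0 = 1 := by rw [he, Pi.single_eq_same]
  have hee : e + e = 0 := pi_add_self e
  set H : Matrix (Fin n → ZMod 2) (Fin n → ZMod 2) (ZMod 2) :=
    Matrix.of (fun x y => if x = y + e ∧ y i0 = 0 then (1 : ZMod 2) else 0) with hH
  have hHapp : ∀ x y, H x y = if x = y + e ∧ y i0 = 0 then (1 : ZMod 2) else 0 := by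
    intro x y; rfl
  have hMH : M * H + H * M = 1 := by
    ext x z
    rw [Matrix.add_apply, Matrix.mul_apply, Matrix.mul_apply, Matrix.one_apply]
    have hs1 : ∑ y, M x y * H y z = M x (z + e) * (if z i0 = 0 then 1 else 0) := by
      rw [Finset.sum_eq_single (z + e)]
      · congr 1
        rw [hHapp]
        by_cases h : z i0 = 0 <;> simp [h]
      · intro y _ hy
        rw [hHapp, if_neg, mul_zero]
        rintro ⟨rfl, -⟩; exact hy rfl
      · intro h; exact absurd (Finset.mem_univ _) h
    have hs2 : ∑ y, H x y * M y z = (if x i0 = 1 then 1 else 0) * M (x + e) z := by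
      rw [Finset.sum_eq_single (x + e)]
      · congr 1
        rw [hHapp]
        have hxe : x = (x + e) + e := by
          have h' : (x + e) + e = x + (e + e) := by ring
          rw [h', hee, add_zero]
        have hio : (x + e) i0 = x i0 + 1 := by
          rw [Pi.add_apply, hei0]
        rw [hio]
        rcases zmod2_cases (x i0) with h | h <;> simp [h, h11, ← hxe]
      · intro y _ hy
        rw [hHapp, if_neg, zero_mul]
        rintro ⟨h1, -⟩
        apply hy
        rw [h1]
        have h' : (y + e) + e = y + (e + e) := by ring
        rw [h', hee, add_zero]
      · intro h; exact absurd (Finset.mem_univ _) h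
    rw [hs1, hs2, hM, hM]
    have hd1 : hammingDist x (z + e) = hammingNorm (x + z + e) := by
      rw [dist_eq_norm_add]; congr 1; ring
    have hd2 : hammingDist (x + e) z = hammingNorm (x + z + e) := by
      rw [dist_eq_norm_add]; congr 1; ring
    rw [hd1, hd2]
    by_cases hN : hammingNorm (x + z + e) = 1
    · obtain ⟨j, hj⟩ := (norm_one_iff _).mp hN
      have hxz : x + z = (Pi.single j 1 : Fin n → ZMod 2) + e := by
        have hthis := congrArg (fun u => u + e) hj
        have h' : x + z + e + e = x + z + (e + e) := by ring
        rw [h', hee, add_zero] at hthis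
        rw [hthis]
      by_cases hji : j = i0
      · subst hji
        have hxz0 : x = z := by
          rw [← he, hee] at hxz
          have hthis := congrArg (fun u => u + z) hxz
          simp only [zero_add] at hthis
          have h' : x + z + z = x + (z + z) := by ring
          rw [h', pi_add_self, add_zero] at hthis
          exact hthis
        subst hxz0
        rw [if_pos rfl, if_pos hN]
        rcases zmod2_cases (x i0) with h | h <;> simp [h, h11]
      · have hxne : x ≠ z := by
          intro h; subst h
          have h0 : x + x = (Pi.single j 1 : Fin n → ZMod 2) + e := hxz
          rw [pi_add_self] at h0
          have hthis := congrFun h0 j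
          rw [Pi.zero_apply, Pi.add_apply, Pi.single_eq_same, he,
            Pi.single_eq_of_ne hji] at hthis
          simp at hthis
        have hio : x i0 = z i0 + 1 := by
          have hthis := congrFun hxz i0
          rw [Pi.add_apply, Pi.add_apply, Pi.single_eq_of_ne (Ne.symm hji), hei0,
            zero_add] at hthis
          have h2 := congrArg (fun a => a + z i0) hthis
          have h3 : x i0 + z i0 + z i0 = x i0 + (z i0 + z i0) := by ring
          rw [h3, CharTwo.add_self_eq_zero, add_zero] at h2
          rw [h2]; ring
        rw [if_neg hxne, if_pos hN, hio]
        rcases zmod2_cases (z i0) with h | h <;> simp [h, h11]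
    · have hxne : x ≠ z := by
        intro h; subst h
        apply hN
        have h' : x + x + e = e := by rw [pi_add_self, zero_add]
        rw [h', he]
        exact norm_single i0
      rw [if_neg hN, if_neg hxne, zero_mul, mul_zero, add_zero]
  -- range = ker
  have hrange : LinearMap.range M.mulVecLin = LinearMap.ker M.mulVecLin := by
    apply le_antisymm
    · rintro v ⟨w, rfl⟩
      rw [LinearMap.mem_ker, ← LinearMap.comp_apply, ← Matrix.mulVecLin_mul, hMM]
      simp
    · intro v hv
      rw [LinearMap.mem_ker] at hv
      refine ⟨H.mulVecLin v, ?_⟩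
      have hc := congrArg (fun A : Matrix (Fin n → ZMod 2) (Fin n → ZMod 2) (ZMod 2) =>
        A.mulVecLin v) hMH
      simp only [Matrix.mulVecLin_add, Matrix.mulVecLin_mul, LinearMap.add_apply,
        LinearMap.comp_apply, Matrix.mulVecLin_one, LinearMap.id_apply] at hc
      rw [hv, map_zero, add_zero] at hc
      exact hc
  have hdim : Module.finrank (ZMod 2) ((Fin n → ZMod 2) → ZMod 2) = 2 ^ n := by
    rw [Module.finrank_fintype_fun_eq_card, Fintype.card_fun, Fintype.card_fin, ZMod.card]
  have hrank : M.rank = 2 ^ (n - 1) := by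
    have hrn := LinearMap.finrank_range_add_finrank_ker M.mulVecLin
    rw [← hrange, hdim] at hrn
    have hMr : M.rank = Module.finrank (ZMod 2) (LinearMap.range M.mulVecLin) := rfl
    have h2n : 2 ^ (n - 1) + 2 ^ (n - 1) = 2 ^ n := by
      rw [← two_mul, ← pow_succ', Nat.sub_add_cancel hpos]
    omega
  -- span of rows = ker
  have hspan : Submodule.span (ZMod 2) (Set.range M) = LinearMap.ker M.mulVecLin := by
    have h1 : LinearMap.range M.mulVecLin = Submodule.span (ZMod 2) (Set.range M) := by
      have hcol : M.col = fun j i => M j i := by funext j i; exact hMcomm i j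
      rw [Matrix.range_mulVecLin, hcol]
    exact h1.symm.trans hrange
  have hker_iff : ∀ v, v ∈ LinearMap.ker M.mulVecLin ↔ ∀ x, ∑ y, M x y * v y = 0 := by
    intro v
    rw [LinearMap.mem_ker, Matrix.mulVecLin_apply]
    constructor
    · intro h x
      exact congrFun h x
    · intro h
      funext x
      exact h x
  refine ⟨by rw [hsymm]; exact hMM, hrank, ?_⟩
  ext v
  simp only [SetLike.mem_coe, Set.mem_setOf_eq]
  constructor
  · intro hv c hc
    have hvk : v ∈ LinearMap.ker M.mulVecLin := hspan ▸ hv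
    induction hc using Submodule.span_induction with
    | mem c hc =>
      obtain ⟨x, rfl⟩ := hc
      have hx := (hker_iff v).mp hvk x
      calc ∑ y, v y * M x y = ∑ y, M x y * v y :=
            Finset.sum_congr rfl fun y _ => mul_comm _ _
        _ = 0 := hx
    | zero => simp
    | add c d _ _ hc hd =>
      simp only [Pi.add_apply, mul_add, Finset.sum_add_distrib, hc, hd, add_zero]
    | smul a c _ hc =>
      simp only [Pi.smul_apply, smul_eq_mul, mul_left_comm, ← Finset.mul_sum, hc, mul_zero]
  · intro hv
    rw [hspan, hker_iff]
    intro x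
    have hx := hv (M x) (Submodule.subset_span ⟨x, rfl⟩)
    calc ∑ y, M x y * v y = ∑ y, v y * M x y :=
          Finset.sum_congr rfl fun y _ => mul_comm _ _
      _ = 0 := hx
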